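/- Let A be a ring, M an A-module, and (x₁, …, xₙ) a regular sequence on M. If m₁, …, mₙ ∈ M satisfy x₁m₁ + ⋯ + xₙmₙ = 0, then each mᵢ lies in (x₁, …, xₙ)M. -/

import Mathlib

/-- The submodule `(x₁, …, x_k)·M` generated by the first `k` elements of the sequence. -/
def seqSMul {A : Type} [CommRing A] {n : ℕ} (x : Fin n → A)
    (M : Type) [AddCommGroup M] [Module A M] (k : ℕ) : Submodule A M :=
  Ideal.span {a : A | ∃ j : Fin n, (j : ℕ) < k ∧ x j = a} • (⊤ : Submodule A M)

def IsRegSeq {A : Type} [CommRing A] {n : ℕ} (x : Fin n → A)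
    (M : Type) [AddCommGroup M] [Module A M] : Prop :=
  seqSMul x M n ≠ ⊤ ∧
    ∀ i : Fin n, ∀ m : M, x i • m ∈ seqSMul x M i → m ∈ seqSMul x M i

section Aux

variable {A : Type} [CommRing A] {n : ℕ} (x : Fin n → A)
    (M : Type) [AddCommGroup M] [Module A M]

lemma seqSMul_mono {k k' : ℕ} (h : k ≤ k') : seqSMul x M k ≤ seqSMul x M k' := by
  apply Submodule.smul_mono_left
  apply Ideal.span_mono
  rintro a ⟨j, hj, rfl⟩
  exact ⟨j, lt_of_lt_of_le hj h, rfl⟩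

lemma smul_mem_seqSMul {k : ℕ} (i : Fin n) (hi : (i : ℕ) < k) (w : M) :
    x i • w ∈ seqSMul x M k :=
  Submodule.smul_mem_smul (Ideal.subset_span ⟨i, hi, rfl⟩) Submodule.mem_top

lemma seqSMul_repr {k : ℕ} {v : M} (hv : v ∈ seqSMul x M k) :
    ∃ u : Fin n → M, v = ∑ i ∈ Finset.univ.filter (fun i : Fin n => (i : ℕ) < k), x i • u i := by
  refine Submodule.smul_induction_on hv ?_ ?_
  · intro a ha w _
    induction ha using Submodule.span_induction with
    | mem a h =>
      obtain ⟨j, hj, rfl⟩ := h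
      refine ⟨Pi.single j w, ?_⟩
      rw [Finset.sum_eq_single j]
      · simp
      · intro b _ hb; simp [Pi.single_apply, hb]
      · intro h; exact absurd (Finset.mem_filter.mpr ⟨Finset.mem_univ j, hj⟩) h
    | zero => exact ⟨0, by simp⟩
    | add a b _ _ ha hb =>
      obtain ⟨u, hu⟩ := ha; obtain ⟨u', hu'⟩ := hb
      exact ⟨u + u', by simp [add_smul, hu, hu', Finset.sum_add_distrib]⟩
    | smul c a _ ha =>
      obtain ⟨u, hu⟩ := ha
      refine ⟨c • u, ?_⟩
      rw [smul_assoc, hu, Finset.smul_sum]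
      simp [smul_comm c]
  · intro v w ⟨u, hu⟩ ⟨u', hu'⟩
    exact ⟨u + u', by simp [hu, hu', Finset.sum_add_distrib]⟩

lemma key (hreg : ∀ i : Fin n, ∀ m : M, x i • m ∈ seqSMul x M i → m ∈ seqSMul x M i) :
    ∀ k, k ≤ n → ∀ m : Fin n → M,
      (∑ i ∈ Finset.univ.filter (fun i : Fin n => (i : ℕ) < k), x i • m i = 0) →
      ∀ i : Fin n, (i : ℕ) < k → m i ∈ seqSMul x M k := by
  intro k
  induction k with
  | zero => intro _ m _ i hi; omega
  | succ k ih =>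
    intro hkn m hrel i hi
    have hk : k < n := hkn
    set j : Fin n := ⟨k, hk⟩ with hj
    have hsplit : Finset.univ.filter (fun i : Fin n => (i : ℕ) < k + 1)
        = insert j (Finset.univ.filter (fun i : Fin n => (i : ℕ) < k)) := by
      ext b
      simp [Fin.ext_iff, hj, Nat.lt_succ_iff_lt_or_eq, or_comm]
      omega
    have hnotmem : j ∉ Finset.univ.filter (fun i : Fin n => (i : ℕ) < k) := by
      simp [hj]
    rw [hsplit, Finset.sum_insert hnotmem] at hrel
    -- x j • m j ∈ seqSMul x M k
    have hxj : x j • m j ∈ seqSMul x M k := by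
      have : x j • m j = -∑ i ∈ Finset.univ.filter (fun i : Fin n => (i : ℕ) < k), x i • m i := by
        linear_combination (norm := module) hrel
      rw [this]
      refine neg_mem (Submodule.sum_mem _ fun b hb => ?_)
      exact smul_mem_seqSMul x M b (Finset.mem_filter.mp hb).2 _
    have hmj : m j ∈ seqSMul x M k := hreg j (m j) hxj
    obtain ⟨u, hu⟩ := seqSMul_repr x M hmj
    rcases Nat.lt_succ_iff_lt_or_eq.mp hi with hik | hik
    · -- use induction hypothesis on m' i = m i + x j • u i
      have hrel' : ∑ i ∈ Finset.univ.filter (fun i : Fin n => (i : ℕ) < k),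
          x i • (m i + x j • u i) = 0 := by
        have : ∑ i ∈ Finset.univ.filter (fun i : Fin n => (i : ℕ) < k),
            x i • (x j • u i) = x j • m j := by
          rw [hu, Finset.smul_sum]
          exact Finset.sum_congr rfl fun b _ => smul_comm _ _ _
        simp only [smul_add, Finset.sum_add_distrib, this]
        linear_combination (norm := module) hrel
      have := ih (le_of_lt hkn) (fun i => m i + x j • u i) hrel' i hik
      have hmi : m i = (m i + x j • u i) - x j • u i := by abel
      rw [hmi]
      exact sub_mem (seqSMul_mono x M (Nat.le_succ k) this)
        (smul_mem_seqSMul x M j (Nat.lt_succ_self k) _)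
    · have : i = j := Fin.ext hik
      rw [this]
      exact seqSMul_mono x M (Nat.le_succ k) hmj

end Aux

theorem statement3 {A : Type} [CommRing A] {n : ℕ} (x : Fin n → A)
    (M : Type) [AddCommGroup M] [Module A M] (hreg : IsRegSeq x M)
    (m : Fin n → M) (hrel : ∑ i, x i • m i = 0) :
    ∀ i : Fin n, m i ∈ seqSMul x M n := by
  have h := key x M hreg.2 n le_rfl m ?_ 
  · exact fun i => h i i.isLt
  · rw [Finset.filter_true_of_mem (fun i _ => i.isLt)]
    exact hrel
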